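/- For distinct points x_1,...,x_n and y not among them, the sum over i from 1 to n of (1/(y-x_i)) · prod_{j≠i}(1-x_j) / prod_{j≠i}(x_i-x_j) equals sum_{i=0}^{n-1} prod_{j=1}^{i}(1-x_j) / prod_{j=1}^{i+1}(y-x_j). -/
import Mathlib


theorem ddiff {K : Type*} [Field K] (x : ℕ → K) :
    ∀ (s : Finset ℕ), s.Nonempty → (∀ i ∈ s, ∀ j ∈ s, i ≠ j → x i ≠ x j) →
      ∀ y : K, (∀ j ∈ s, y ≠ x j) →
        ∑ i ∈ s, (1 / (y - x i)) / ∏ j ∈ s.erase i, (x i - x j)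
          = 1 / ∏ j ∈ s, (y - x j) := by
  intro s hs
  induction hs using Finset.Nonempty.cons_induction with
  | singleton a =>
    intro _ y _
    simp
  | cons a t ha ht IH =>
    intro hx y hy
    have hxa : ∀ j ∈ t, x a ≠ x j := fun j hj =>
      hx a (Finset.mem_cons_self a t) j (Finset.mem_cons_of_mem hj)
        (fun h => ha (h ▸ hj))
    have hxt : ∀ i ∈ t, ∀ j ∈ t, i ≠ j → x i ≠ x j := fun i hi j hj hij =>
      hx i (Finset.mem_cons_of_mem hi) j (Finset.mem_cons_of_mem hj) hij
    have hyt : ∀ j ∈ t, y ≠ x j := fun j hj => hy j (Finset.mem_cons_of_mem hj)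
    have hya : y - x a ≠ 0 := sub_ne_zero.2 (hy a (Finset.mem_cons_self a t))
    have hP : (∏ j ∈ t, (x a - x j)) ≠ 0 :=
      Finset.prod_ne_zero_iff.2 fun j hj => sub_ne_zero.2 (hxa j hj)
    have hQ : (∏ j ∈ t, (y - x j)) ≠ 0 :=
      Finset.prod_ne_zero_iff.2 fun j hj => sub_ne_zero.2 (hyt j hj)
    rw [Finset.sum_cons, Finset.prod_cons]
    have herase : (Finset.cons a t ha).erase a = t := by
      rw [Finset.cons_eq_insert, Finset.erase_insert (by simpa using ha)]
    rw [herase]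
    have hsum : ∑ i ∈ t, (1 / (y - x i)) / ∏ j ∈ (Finset.cons a t ha).erase i, (x i - x j)
        = (1 / (y - x a)) *
            ((∑ i ∈ t, (1 / (x i - x a)) / ∏ j ∈ t.erase i, (x i - x j)) +
             (∑ i ∈ t, (1 / (y - x i)) / ∏ j ∈ t.erase i, (x i - x j))) := by
      rw [mul_add, Finset.mul_sum, Finset.mul_sum, ← Finset.sum_add_distrib]
      apply Finset.sum_congr rfl
      intro i hi
      have hia : i ≠ a := fun h => ha (h ▸ hi)
      have h1 : (Finset.cons a t ha).erase i = Finset.cons a (t.erase i)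
          (fun h => ha (Finset.mem_of_mem_erase h)) := by
        exact Finset.erase_cons_of_ne ha hia.symm
      rw [h1, Finset.prod_cons]
      have hxia : x i - x a ≠ 0 := sub_ne_zero.2 (hxa i hi).symm
      have hyi : y - x i ≠ 0 := sub_ne_zero.2 (hyt i hi)
      have hD : (∏ j ∈ t.erase i, (x i - x j)) ≠ 0 :=
        Finset.prod_ne_zero_iff.2 fun j hj => sub_ne_zero.2
          (hxt i hi j (Finset.mem_of_mem_erase hj) (Finset.ne_of_mem_erase hj).symm)
      field_simp
      ring
    rw [hsum]
    have h2 : ∑ i ∈ t, (1 / (x i - x a)) / ∏ j ∈ t.erase i, (x i - x j)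
        = -(1 / ∏ j ∈ t, (x a - x j)) := by
      rw [← IH hxt (x a) hxa, ← Finset.sum_neg_distrib]
      refine Finset.sum_congr rfl fun i hi => ?_
      rw [show x i - x a = -(x a - x i) by ring, div_neg, neg_div]
    rw [h2, IH hxt y hyt]
    field_simp
    ring

/-- The identity obtained by comparing Newton and Lagrange interpolation of
`f(x) = 1/(y - x)` at the point `x = 1`. -/
theorem newton_lagrange_at_one {K : Type*} [Field K] (n : ℕ) (x : ℕ → K) (y : K)
    (hx : ∀ i j, i < n → j < n → i ≠ j → x i ≠ x j)
    (hy : ∀ j, j < n → y ≠ x j) :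
    ∑ i ∈ Finset.range n,
        (1 / (y - x i)) * (∏ j ∈ (Finset.range n).erase i, (1 - x j)) /
          (∏ j ∈ (Finset.range n).erase i, (x i - x j)) =
      ∑ i ∈ Finset.range n,
        (∏ j ∈ Finset.range i, (1 - x j)) / (∏ j ∈ Finset.range (i + 1), (y - x j)) := by
  induction n with
  | zero => simp
  | succ n IH =>
    have hx' : ∀ i j, i < n → j < n → i ≠ j → x i ≠ x j := fun i j hi hj =>
      hx i j (hi.trans (Nat.lt_succ_self n)) (hj.trans (Nat.lt_succ_self n))
    have hy' : ∀ j, j < n → y ≠ x j := fun j hj => hy j (hj.trans (Nat.lt_succ_self n))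
    have hne : n ∉ Finset.range n := by simp
    have heraseN : (Finset.range (n + 1)).erase n = Finset.range n := by
      rw [Finset.range_add_one, Finset.erase_insert hne]
    set A := ∏ j ∈ Finset.range n, (1 - x j) with hA
    rw [Finset.sum_range_succ, Finset.sum_range_succ, heraseN]
    have hterm : ∀ i ∈ Finset.range n,
        (1 / (y - x i)) * (∏ j ∈ (Finset.range (n + 1)).erase i, (1 - x j)) /
            (∏ j ∈ (Finset.range (n + 1)).erase i, (x i - x j))
          = (1 / (y - x i)) * (∏ j ∈ (Finset.range n).erase i, (1 - x j)) /
              (∏ j ∈ (Finset.range n).erase i, (x i - x j))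
            + A * ((1 / (y - x i)) / ∏ j ∈ (Finset.range (n + 1)).erase i, (x i - x j)) := by
      intro i hi
      rw [Finset.mem_range] at hi
      have hin : n ≠ i := fun h => (h ▸ hi).false
      have hrw : (Finset.range (n + 1)).erase i
          = insert n ((Finset.range n).erase i) := by
        rw [Finset.range_add_one, Finset.erase_insert_of_ne hin]
      have hnot : n ∉ (Finset.range n).erase i := fun h => hne (Finset.mem_of_mem_erase h)
      rw [hrw, Finset.prod_insert hnot, Finset.prod_insert hnot]
      have hAi : A = (1 - x i) * ∏ j ∈ (Finset.range n).erase i, (1 - x j) := by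
        rw [hA]; exact (Finset.mul_prod_erase _ _ (Finset.mem_range.2 hi)).symm
      have hyi : y - x i ≠ 0 := sub_ne_zero.2 (hy' i hi)
      have hxin : x i - x n ≠ 0 := sub_ne_zero.2
        (hx i n (hi.trans (Nat.lt_succ_self n)) (Nat.lt_succ_self n) hin.symm)
      have hF : (∏ j ∈ (Finset.range n).erase i, (x i - x j)) ≠ 0 :=
        Finset.prod_ne_zero_iff.2 fun j hj => sub_ne_zero.2
          (hx i j (hi.trans (Nat.lt_succ_self n))
            ((Finset.mem_range.1 (Finset.mem_of_mem_erase hj)).trans (Nat.lt_succ_self n))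
            (Finset.ne_of_mem_erase hj).symm)
      rw [hAi]
      field_simp
      ring
    rw [Finset.sum_congr rfl hterm, Finset.sum_add_distrib, IH hx' hy']
    have hdd : ∑ i ∈ Finset.range (n + 1),
        (1 / (y - x i)) / ∏ j ∈ (Finset.range (n + 1)).erase i, (x i - x j)
          = 1 / ∏ j ∈ Finset.range (n + 1), (y - x j) := by
      apply ddiff x (Finset.range (n + 1)) (Finset.nonempty_range_iff.2 (Nat.succ_ne_zero n))
      · intro i hi j hj hij
        exact hx i j (Finset.mem_range.1 hi) (Finset.mem_range.1 hj) hij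
      · intro j hj
        exact hy j (Finset.mem_range.1 hj)
    have hsplit : ∑ i ∈ Finset.range (n + 1),
        (1 / (y - x i)) / ∏ j ∈ (Finset.range (n + 1)).erase i, (x i - x j)
        = (∑ i ∈ Finset.range n,
            (1 / (y - x i)) / ∏ j ∈ (Finset.range (n + 1)).erase i, (x i - x j))
          + (1 / (y - x n)) / ∏ j ∈ Finset.range n, (x n - x j) := by
      rw [Finset.sum_range_succ, heraseN]
    have key : (∑ i ∈ Finset.range n,
          A * ((1 / (y - x i)) / ∏ j ∈ (Finset.range (n + 1)).erase i, (x i - x j)))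
        + (1 / (y - x n)) * A / ∏ j ∈ Finset.range n, (x n - x j)
        = A / ∏ j ∈ Finset.range (n + 1), (y - x j) := by
      rw [← Finset.mul_sum]
      have : (1 / (y - x n)) * A / ∏ j ∈ Finset.range n, (x n - x j)
          = A * ((1 / (y - x n)) / ∏ j ∈ Finset.range n, (x n - x j)) := by ring
      rw [this, ← mul_add, ← hsplit, hdd]
      ring
    rw [add_assoc, key, hA]
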